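/- Let G be a group, g ∈ G a central element, χ : G → k* a character with d = order of χ(g) finite and d > 1, and σ : G × G → k* a 2-cocycle. Assume k contains all roots of unity (characteristic zero with all primitive roots of unity). Then for every h ∈ G: ∏_{i=0}^{d-1} ( σ(g, gⁱh) − χ(gⁱh) σ(gⁱh, g) ) = σ(g,g)·σ(g,g²)···σ(g,g^{d-1}) · ( σ(g^d, h) − χ(h)^d σ(h, g^d) ). -/

import Mathlib

open Finset in
private lemma aux_prod_sub_root {k : Type*} [Field k] {ζ : k} {d : ℕ}
    (hζ : IsPrimitiveRoot ζ d) (hd : 0 < d) (a b : k) :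
    ∏ i ∈ Finset.range d, (a - ζ ^ i * b) = a ^ d - b ^ d := by
  classical
  haveI : NeZero d := ⟨hd.ne'⟩
  have himg : Polynomial.nthRootsFinset d (1 : k) = (Finset.range d).image (ζ ^ ·) := by
    ext x
    simp only [Finset.mem_image, Finset.mem_range, Polynomial.mem_nthRootsFinset hd (1 : k)]
    constructor
    · intro hx
      obtain ⟨i, hi, hix⟩ := hζ.eq_pow_of_pow_eq_one hx
      exact ⟨i, hi, hix⟩
    · rintro ⟨i, _, rfl⟩
      show (ζ ^ i) ^ d = 1
      rw [← pow_mul, mul_comm, pow_mul, hζ.pow_eq_one, one_pow]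
  rw [hζ.pow_sub_pow_eq_prod_sub_mul a b hd, himg,
    Finset.prod_image fun x hx y hy hxy =>
      hζ.injOn_pow (Finset.mem_coe.mpr hx) (Finset.mem_coe.mpr hy) hxy]

/-- Lemma 2.7: For a 2-cocycle σ on G with values in kˣ, a central
element g, a character χ with d = o(χ(g)) > 1, and any h ∈ G:
∏_{i=0}^{d-1} (σ(g,gⁱh) − χ(gⁱh)σ(gⁱh,g))
  = σ(g,g)···σ(g,g^{d-1}) · (σ(g^d,h) − χ(h)^d σ(h,g^d)). -/
theorem cocycle_product_identity {G : Type*} [Group G] {k : Type*} [Field k]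
    [CharZero k] (hk : ∀ n : ℕ, 0 < n → ∃ ζ : k, IsPrimitiveRoot ζ n)
    (g : G) (hg : g ∈ Subgroup.center G)
    (χ : G →* kˣ)
    (σ : G → G → kˣ)
    (hσ : ∀ a b c : G, σ a b * σ (a * b) c = σ b c * σ a (b * c))
    (hσr : ∀ a : G, σ a 1 = 1) (hσl : ∀ a : G, σ 1 a = 1)
    (d : ℕ) (hd : d = orderOf (χ g)) (hd1 : 1 < d)
    (h : G) :
    ∏ i ∈ Finset.range d,
        ((σ g (g ^ i * h) : k) - (χ (g ^ i * h) : kˣ) * (σ (g ^ i * h) g : k)) =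
      (∏ i ∈ Finset.range (d - 1), ((σ g (g ^ (i + 1)) : kˣ) : k)) *
        ((σ (g ^ d) h : k) - ((χ h : kˣ) : k) ^ d * (σ h (g ^ d) : k)) := by
  have hσk : ∀ a b c : G, (σ a b : k) * σ (a * b) c = σ b c * σ a (b * c) := by
    intro a b c; exact_mod_cast congrArg Units.val (hσ a b c)
  have nz : ∀ a b : G, (σ a b : k) ≠ 0 := fun a b => Units.ne_zero _
  have hc : ∀ a : G, g * a = a * g := fun a => ((Subgroup.mem_center_iff.mp hg) a).symm
  have hcm : ∀ (a : G) (m : ℕ), g ^ m * a = a * g ^ m := fun a m => Commute.pow_left (hc a) m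
  have hgg : ∀ m : ℕ, (σ g (g ^ m) : k) = σ (g ^ m) g := by
    intro m
    induction m with
    | zero => simp [hσr, hσl]
    | succ m ih =>
      have e := hσk g (g ^ m) g
      rw [← pow_succ', ← pow_succ] at e
      refine mul_left_cancel₀ (nz (g ^ m) g) ?_
      rw [← e, ih]
  set Q : ℕ → k := fun m => ∏ i ∈ Finset.range m, (σ g (g ^ i) : k) with hQdef
  have hQs : ∀ m : ℕ, Q (m + 1) = Q m * σ g (g ^ m) := fun m => Finset.prod_range_succ _ m
  have hA : ∀ m : ℕ, ∏ i ∈ Finset.range m, (σ g (g ^ i * h) : k) = Q m * σ (g ^ m) h := by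
    intro m
    induction m with
    | zero => simp [hQdef, hσl]
    | succ m ih =>
      rw [Finset.prod_range_succ, ih, hQs]
      have e := hσk g (g ^ m) h
      rw [← pow_succ'] at e
      linear_combination (-(Q m)) * e
  have hB : ∀ m : ℕ, ∏ i ∈ Finset.range m, (σ (g ^ i * h) g : k) = Q m * σ h (g ^ m) := by
    intro m
    induction m with
    | zero => simp [hQdef, hσr]
    | succ m ih =>
      rw [Finset.prod_range_succ, ih, hQs]
      have e := hσk h (g ^ m) g
      rw [← hcm h m, ← pow_succ, ← hgg m] at e
      linear_combination (Q m) * e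
  have hratio : ∀ i : ℕ, (σ g (g ^ i * h) : k) * σ h g = σ g h * σ (g ^ i * h) g := by
    intro i
    induction i with
    | zero => rw [pow_zero, one_mul]
    | succ i ih =>
      have e := hσk g (g ^ i * h) g
      rw [← mul_assoc, ← pow_succ', mul_assoc, ← hc h, ← mul_assoc, ← pow_succ] at e
      refine mul_left_cancel₀ (nz (g ^ i * h) g) ?_
      linear_combination (-(σ h g : k)) * e + (σ (g ^ (i + 1) * h) g : k) * ih
  have hd0 : 0 < d := by omega
  -- primitive root
  have hζu : IsPrimitiveRoot (χ g) d := hd ▸ IsPrimitiveRoot.orderOf (χ g)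
  have hζ : IsPrimitiveRoot ((χ g : kˣ) : k) d := IsPrimitiveRoot.coe_units_iff.mpr hζu
  set t : k := (σ g h : k) * ((σ h g : k))⁻¹ with htdef
  have hchi : ∀ i : ℕ, ((χ (g ^ i * h) : kˣ) : k) = ((χ g : kˣ) : k) ^ i * ((χ h : kˣ) : k) := by
    intro i
    rw [map_mul, map_pow]
    push_cast
    ring
  have hfac : ∀ i : ℕ,
      (σ g (g ^ i * h) : k) - ((χ (g ^ i * h) : kˣ) : k) * (σ (g ^ i * h) g : k) =
        (σ (g ^ i * h) g : k) * (t - ((χ g : kˣ) : k) ^ i * ((χ h : kˣ) : k)) := by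
    intro i
    rw [hchi i, htdef]
    have hr := hratio i
    field_simp
    linear_combination hr
  have step1 : ∏ i ∈ Finset.range d,
      ((σ g (g ^ i * h) : k) - ((χ (g ^ i * h) : kˣ) : k) * (σ (g ^ i * h) g : k)) =
      (Q d * σ h (g ^ d)) * (t ^ d - ((χ h : kˣ) : k) ^ d) := by
    rw [Finset.prod_congr rfl fun i _ => hfac i, Finset.prod_mul_distrib, hB d,
      aux_prod_sub_root hζ hd0]
  have hprod : (Q d * (σ (g ^ d) h : k)) * ((σ h g : k)) ^ d =
      ((σ g h : k)) ^ d * (Q d * σ h (g ^ d)) := by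
    have e : ∏ i ∈ Finset.range d, ((σ g (g ^ i * h) : k) * (σ h g : k)) =
        ∏ i ∈ Finset.range d, ((σ g h : k) * (σ (g ^ i * h) g : k)) :=
      Finset.prod_congr rfl fun i _ => hratio i
    simp only [Finset.prod_mul_distrib, Finset.prod_const, Finset.card_range] at e
    rw [hA d, hB d] at e
    exact e
  have hQ' : ∀ m : ℕ, Q (m + 1) = ∏ i ∈ Finset.range m, ((σ g (g ^ (i + 1)) : kˣ) : k) := by
    intro m
    induction m with
    | zero => simp [hQs, hQdef, hσr]
    | succ m ih => rw [hQs (m + 1), ih, Finset.prod_range_succ]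
  have hQeq : Q d = ∏ i ∈ Finset.range (d - 1), ((σ g (g ^ (i + 1)) : kˣ) : k) := by
    conv_lhs => rw [show d = d - 1 + 1 by omega]
    rw [hQ']
  rw [step1, ← hQeq, htdef]
  have hne : ((σ h g : k)) ^ d ≠ 0 := pow_ne_zero _ (nz h g)
  refine mul_left_cancel₀ hne ?_
  rw [mul_pow, inv_pow]
  field_simp
  linear_combination -hprod
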